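/- arXiv:1409.2289 — 3 statements merged into one kernel-verified Lean document; each statement's English description precedes it below -/
import Mathlib

section
/- Let d ≥ 1 and k ≥ 0 be integers, and let f : ℝ^d → ℝ be measurable with ∫ |x^α f(x)| dx < ∞ for a multi-index α ∈ ℕ^d with |α| = k+1. Define F_α(x) := (−1)^{|α|} ∫₀¹ (k+1) (1−t)^k t^{−d−|α|} (x^α / α!) f(x/t) dt. Then F_α is integrable on ℝ^d and ‖F_α‖_{L¹} ≤ ‖x^α f(x)‖_{L¹} / α!. -/
open MeasureTheory Real Filter

noncomputable section

/-- Partial derivative in the `i`-th coordinate direction on `ℝ^d`. -/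
def pd (d : ℕ) (i : Fin d) (f : EuclideanSpace ℝ (Fin d) → ℝ) :
    EuclideanSpace ℝ (Fin d) → ℝ :=
  fun x => fderiv ℝ f x (EuclideanSpace.single i 1)

/-- Mixed partial derivative `D^α = ∂₁^{α₁} ⋯ ∂_d^{α_d}`. -/
def Dmul (d : ℕ) (α : Fin d → ℕ) (f : EuclideanSpace ℝ (Fin d) → ℝ) :
    EuclideanSpace ℝ (Fin d) → ℝ :=
  ((List.finRange d).map (fun i => (pd d i)^[α i])).foldr (· ∘ ·) id f

/-- Heat kernel `G(x,t) = (4πt)^{-d/2} exp(-|x|²/(4t))` on `ℝ^d`. -/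
def heatKernel (d : ℕ) (x : EuclideanSpace ℝ (Fin d)) (t : ℝ) : ℝ :=
  (4 * π * t) ^ (-(d : ℝ) / 2) * Real.exp (-‖x‖ ^ 2 / (4 * t))

/-- The heat-kernel derivative approximation of order `k` built from `u₀`. -/
def heatApprox (d k : ℕ) (u₀ : EuclideanSpace ℝ (Fin d) → ℝ)
    (x : EuclideanSpace ℝ (Fin d)) (t : ℝ) : ℝ :=
  ∑ j ∈ Finset.range (k + 1), ∑ α ∈ Finset.Nat.antidiagonalTuple d j,
    ((-1 : ℝ) ^ (∑ i, α i) / ∏ i, ((α i).factorial : ℝ)) *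
      (∫ y, (∏ i, y i ^ α i) * u₀ y) * Dmul d α (fun z => heatKernel d z t) x

/-- The remainder function `F_α`. Here `k` should satisfy `|α| = k+1`. -/
def Falpha (d k : ℕ) (α : Fin d → ℕ) (f : EuclideanSpace ℝ (Fin d) → ℝ)
    (x : EuclideanSpace ℝ (Fin d)) : ℝ :=
  (-1 : ℝ) ^ (∑ i, α i) * ∫ t in (0:ℝ)..1,
    ((k : ℝ) + 1) * (1 - t) ^ k / t ^ (d + ∑ i, α i) *
      ((∏ i, x i ^ α i) / ∏ i, ((α i).factorial : ℝ)) * f (t⁻¹ • x)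

/-- Physicists' Hermite polynomial `H_n(x) = (-1)^n e^{x²} (d/dx)^n e^{-x²}`. -/
def hPoly (n : ℕ) (x : ℝ) : ℝ :=
  (-1 : ℝ) ^ n * Real.exp (x ^ 2) * iteratedDeriv n (fun y => Real.exp (-y ^ 2)) x


/-- `F_α` is integrable with `‖F_α‖₁ ≤ ‖x^α f‖₁ / α!`. -/
theorem stmt_0 (d k : ℕ) (hd : 1 ≤ d) (α : Fin d → ℕ) (hα : ∑ i, α i = k + 1)
    (f : EuclideanSpace ℝ (Fin d) → ℝ) (hf : Measurable f)
    (hint : Integrable (fun x => (∏ i, x i ^ α i) * f x)) :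
    Integrable (Falpha d k α f) ∧
      ∫ x, |Falpha d k α f x| ≤
        (∫ x, |(∏ i, x i ^ α i) * f x|) / ∏ i, ((α i).factorial : ℝ) := by
  classical
  set A := ∑ i, α i with hA
  set c := ∏ i, ((α i).factorial : ℝ) with hcdef
  have hc : 0 < c := Finset.prod_pos fun i _ => Nat.cast_pos.2 (Nat.factorial_pos _)
  set G : EuclideanSpace ℝ (Fin d) → ℝ := fun y => (∏ i, y i ^ α i) * f y with hGdef
  set K := ∫ y, |G y| with hKdef
  set μ : Measure ℝ := volume.restrict (Set.Ioc (0:ℝ) 1) with hμdef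
  set H : ℝ × EuclideanSpace ℝ (Fin d) → ℝ := fun p =>
    ((k:ℝ)+1) * (1-p.1)^k / p.1 ^ (d+A) * ((∏ i, p.2 i ^ α i)/c) * f (p.1⁻¹ • p.2) with hHdef
  have hHm : Measurable H := by
    apply Measurable.mul
    · apply Measurable.mul
      · exact (measurable_const.mul ((measurable_const.sub measurable_fst).pow_const k)).div
          (measurable_fst.pow_const (d+A))
      · exact (Finset.measurable_prod Finset.univ fun i _ =>
          ((measurable_pi_apply i).comp ((WithLp.measurable_ofLp 2 _).comp measurable_snd)).pow_const (α i)).div_const c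
    · exact hf.comp (measurable_fst.inv.smul measurable_snd)
  -- key pointwise identity
  have key : ∀ t : ℝ, t ∈ Set.Ioc (0:ℝ) 1 → ∀ x, H (t, x) =
      (((k:ℝ)+1) * (1-t)^k / t ^ (d+A) * t^A / c) * G (t⁻¹ • x) := by
    intro t ht x
    have ht0 : t ≠ 0 := ne_of_gt ht.1
    simp only [hHdef, hGdef, PiLp.smul_apply, smul_eq_mul, mul_pow,
      Finset.prod_mul_distrib, Finset.prod_pow_eq_pow_sum, ← hA]
    field_simp
    have hT : t ^ A * t⁻¹ ^ A = 1 := by rw [← mul_pow, mul_inv_cancel₀ ht0, one_pow]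
    simp only [one_div]
    linear_combination (-(∏ i, x i ^ α i) * f (t⁻¹ • x) * (1 - t) ^ k) * hT
  have hslice : ∀ t ∈ Set.Ioc (0:ℝ) 1, Integrable (fun x => H (t, x)) := by
    intro t ht
    have h1 : Integrable (fun x => G (t⁻¹ • x)) :=
      hint.comp_smul (inv_ne_zero (ne_of_gt ht.1))
    have heq : (fun x => H (t, x)) =
        fun x => (((k:ℝ)+1) * (1-t)^k / t ^ (d+A) * t^A / c) * G (t⁻¹ • x) :=
      funext (key t ht)
    rw [heq]; exact h1.const_mul _
  have hnorm : ∀ t ∈ Set.Ioc (0:ℝ) 1, (∫ x, ‖H (t, x)‖) = ((k:ℝ)+1) * (1-t)^k * K / c := by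
    intro t ht
    have ht0 : (0:ℝ) < t := ht.1
    have h1t : (0:ℝ) ≤ 1 - t := by linarith [ht.2]
    have heq : (fun x => ‖H (t, x)‖) =
        fun x => (((k:ℝ)+1) * (1-t)^k / t ^ (d+A) * t^A / c) * |G (t⁻¹ • x)| := by
      funext x
      rw [key t ht x, Real.norm_eq_abs, abs_mul]
      congr 1
      exact abs_of_nonneg (by positivity)
    rw [heq, integral_const_mul]
    have hcv := MeasureTheory.Measure.integral_comp_inv_smul_of_nonneg
      (volume : Measure (EuclideanSpace ℝ (Fin d))) (fun y => |G y|) ht0.le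
    rw [finrank_euclideanSpace_fin] at hcv
    rw [hcv, smul_eq_mul, ← hKdef]
    have hpow : t ^ (d+A) = t ^ d * t ^ A := pow_add t d A
    field_simp [hpow]
    ring
  have haes : ∀ᵐ t ∂μ, Integrable (fun x => H (t, x)) := by
    rw [hμdef, ae_restrict_iff' measurableSet_Ioc]
    exact Eventually.of_forall hslice
  have hnormint : Integrable (fun t => ∫ x, ‖H (t, x)‖) μ := by
    have hcont : Integrable (fun t : ℝ => ((k:ℝ)+1)*(1-t)^k * K / c) μ := by
      exact ((continuous_const.mul ((continuous_const.sub continuous_id).pow k)).mul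
        continuous_const).div_const c |>.integrableOn_Ioc
    apply hcont.congr
    rw [hμdef, Filter.EventuallyEq, ae_restrict_iff' measurableSet_Ioc]
    exact Eventually.of_forall fun t ht => (hnorm t ht).symm
  have hHint : Integrable H (μ.prod volume) :=
    (integrable_prod_iff hHm.aestronglyMeasurable).2 ⟨haes, hnormint⟩
  have hI1 : Integrable (fun x => ∫ t, H (t, x) ∂μ) := hHint.integral_prod_right
  have hFeq : Falpha d k α f = fun x => (-1:ℝ)^A * ∫ t, H (t, x) ∂μ := by
    funext x
    simp only [Falpha, ← hA]
    congr 1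
    rw [intervalIntegral.integral_of_le zero_le_one]
  constructor
  · rw [hFeq]; exact hI1.const_mul _
  · have hI2 : Integrable (fun x => ∫ t, ‖H (t, x)‖ ∂μ) := hHint.norm.integral_prod_right
    have h1 : ∫ x, |Falpha d k α f x| ≤ ∫ x, ∫ t, ‖H (t, x)‖ ∂μ := by
      apply integral_mono _ hI2
      · intro x
        rw [hFeq]
        simp only [abs_mul, abs_pow, abs_neg, abs_one, one_pow, one_mul]
        rw [← Real.norm_eq_abs]
        exact (norm_integral_le_integral_norm _).trans_eq (by simp [Real.norm_eq_abs])
      · rw [hFeq]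
        exact (hI1.const_mul _).abs
    have h2 : ∫ x, ∫ t, ‖H (t, x)‖ ∂μ = ∫ t, (∫ x, ‖H (t, x)‖) ∂μ := by
      exact (integral_integral_swap hHint.norm).symm
    have h3 : (∫ t, (∫ x, ‖H (t, x)‖) ∂μ) = K / c := by
      have e1 : (∫ t, (∫ x, ‖H (t, x)‖) ∂μ) = ∫ t, ((k:ℝ)+1) * (1-t)^k * K / c ∂μ := by
        apply integral_congr_ae
        rw [hμdef, Filter.EventuallyEq, ae_restrict_iff' measurableSet_Ioc]
        exact Eventually.of_forall fun t ht => hnorm t ht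
      rw [e1]
      have e2 : ∀ t : ℝ, ((k:ℝ)+1) * (1-t)^k * K / c = (((k:ℝ)+1) * (1-t)^k) * (K / c) := by
        intro t; ring
      simp_rw [e2]
      rw [integral_mul_const]
      have e3 : (∫ t in Set.Ioc (0:ℝ) 1, ((k:ℝ)+1) * (1-t)^k) = 1 := by
        rw [← intervalIntegral.integral_of_le zero_le_one,
          intervalIntegral.integral_const_mul,
          intervalIntegral.integral_comp_sub_left (fun u : ℝ => u ^ k) 1]
        norm_num [integral_pow]
        rw [mul_inv_cancel₀]
        positivity
      rw [hμdef] at *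
      rw [e3, one_mul]
    refine (h1.trans_eq (h2.trans h3)).trans ?_
    rw [hKdef]


end
end

section
/- For every natural number n, Γ((n+1)/2)² ≤ 2^{−n} · π · Γ(n+1), where Γ is the real Gamma function. -/
open Real

/-- `Γ((n+1)/2)² ≤ 2^{-n} π Γ(n+1)`. -/
theorem stmt_7 (n : ℕ) :
    Real.Gamma (((n : ℝ) + 1) / 2) ^ 2 ≤
      2 ^ (-(n : ℝ)) * π * Real.Gamma ((n : ℝ) + 1) := by
  induction n using Nat.twoStepInduction with
  | zero =>
    simp only [Nat.cast_zero, zero_add, neg_zero, Real.rpow_zero]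
    rw [show (1:ℝ)/2 = 1/2 by norm_num, Real.Gamma_one_half_eq, sq_sqrt pi_pos.le,
      Real.Gamma_one]
    simp
  | one =>
    have : ((1:ℕ):ℝ) = 1 := by norm_num
    rw [this, show ((1:ℝ)+1)/2 = 1 by norm_num, Real.Gamma_one,
      show (1:ℝ)+1 = 2 by norm_num, Real.Gamma_two]
    rw [show (2:ℝ) ^ (-(1:ℝ)) = 1/2 by
      rw [Real.rpow_neg_one]; norm_num]
    nlinarith [pi_gt_three]
  | more n ih _ =>
    have hx : ((n:ℝ) + 1) / 2 ≠ 0 := by positivity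
    have h1 : (((n + 2 : ℕ) : ℝ) + 1) / 2 = ((n:ℝ)+1)/2 + 1 := by push_cast; ring
    have h2 : ((n + 2 : ℕ) : ℝ) + 1 = ((n:ℝ)+1) + 1 + 1 := by push_cast; ring
    rw [h1, h2, Real.Gamma_add_one hx, Real.Gamma_add_one (by positivity : (n:ℝ)+1+1 ≠ 0),
      Real.Gamma_add_one (by positivity : (n:ℝ)+1 ≠ 0)]
    have h3 : (2:ℝ) ^ (-((n + 2 : ℕ) : ℝ)) = 2 ^ (-(n:ℝ)) * (1/4) := by
      push_cast
      rw [show -((n:ℝ)+2) = -(n:ℝ) + (-2) by ring, Real.rpow_add (by norm_num),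
        show (-2:ℝ) = ((-2:ℤ):ℝ) by norm_num, Real.rpow_intCast]
      norm_num
    rw [h3]
    have hG : 0 ≤ Real.Gamma (((n:ℝ)+1)/2) := (Real.Gamma_pos_of_pos (by positivity)).le
    have hGn : 0 ≤ Real.Gamma ((n:ℝ)+1) := (Real.Gamma_pos_of_pos (by positivity)).le
    have hpow : (0:ℝ) < 2 ^ (-(n:ℝ)) := Real.rpow_pos_of_pos (by norm_num) _
    have key : (((n:ℝ)+1)/2)^2 * Real.Gamma (((n:ℝ)+1)/2) ^ 2
        ≤ (((n:ℝ)+1)/2)^2 * (2 ^ (-(n:ℝ)) * π * Real.Gamma ((n:ℝ)+1)) := by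
      apply mul_le_mul_of_nonneg_left ih (by positivity)
    calc (((n:ℝ)+1)/2 * Real.Gamma (((n:ℝ)+1)/2)) ^ 2
        = (((n:ℝ)+1)/2)^2 * Real.Gamma (((n:ℝ)+1)/2) ^ 2 := by ring
      _ ≤ (((n:ℝ)+1)/2)^2 * (2 ^ (-(n:ℝ)) * π * Real.Gamma ((n:ℝ)+1)) := key
      _ ≤ 2 ^ (-(n:ℝ)) * (1/4) * π * (((n:ℝ)+1+1) * (((n:ℝ)+1) * Real.Gamma ((n:ℝ)+1))) := by
          nlinarith [pi_pos, mul_pos hpow pi_pos, mul_nonneg (mul_pos hpow pi_pos).le hGn]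
end

section
/- Let d ≥ 1, C > 0, t₀ > 0, and u₀(x) = C e^{−|x|²/(4t₀)} on ℝ^d. Let u_k be the heat-kernel derivative approximation of order k built from u₀. Then for every fixed t with 0 < t < t₀, sup_{x ∈ ℝ^d} |u_k(x,t)| → ∞ as k → ∞. -/
open MeasureTheory Real Filter

noncomputable section

namespace Stmt14
open scoped Nat

def gauss (a : ℝ) : ℝ → ℝ := fun s => Real.exp (-(a * s ^ 2))

lemma contDiff_gauss (a : ℝ) : ContDiff ℝ (⊤ : ℕ∞) (gauss a) :=
  Real.contDiff_exp.comp ((contDiff_const.mul (contDiff_id.pow 2)).neg)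

lemma iteratedDeriv_comp_const_mul {f : ℝ → ℝ} (hf : ContDiff ℝ (⊤ : ℕ∞) f) (c : ℝ) (n : ℕ) :
    iteratedDeriv n (fun s => f (c * s)) = fun x => c ^ n * iteratedDeriv n f (c * x) := by
  induction n with
  | zero => simp
  | succ n ih =>
    have hF : Differentiable ℝ (iteratedDeriv n f) := by
      rw [iteratedDeriv_eq_iterate]
      exact (ContDiff.iterate_deriv n hf).differentiable (by simp)
    funext x
    rw [iteratedDeriv_succ, ih]
    have h1 : HasDerivAt (fun y : ℝ => iteratedDeriv n f (c * y))
        (iteratedDeriv (n + 1) f (c * x) * c) x := by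
      rw [iteratedDeriv_succ]
      exact HasDerivAt.comp x (hF (c * x)).hasDerivAt
        (by simpa using (hasDerivAt_id x).const_mul c)
    have h2 := (h1.const_mul (c ^ n)).deriv
    rw [h2]; ring

lemma gauss_eq_comp (a : ℝ) (ha : 0 ≤ a) :
    gauss a = fun s => (fun y : ℝ => Real.exp (-(y ^ 2 / 2))) (Real.sqrt (2 * a) * s) := by
  funext s
  have : Real.sqrt (2 * a) ^ 2 = 2 * a := Real.sq_sqrt (by linarith)
  simp only [gauss, mul_pow, this]
  ring_nf

lemma gauss_repr (a : ℝ) (ha : 0 < a) (n : ℕ) (x : ℝ) :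
    iteratedDeriv n (gauss a) x =
      Real.sqrt (2 * a) ^ n * ((-1 : ℝ) ^ n *
        Polynomial.aeval (Real.sqrt (2 * a) * x) (Polynomial.hermite n)) * gauss a x := by
  have hc : ContDiff ℝ (⊤ : ℕ∞) (fun y : ℝ => Real.exp (-(y ^ 2 / 2))) :=
    Real.contDiff_exp.comp ((contDiff_id.pow 2).div_const 2).neg
  rw [gauss_eq_comp a ha.le, iteratedDeriv_comp_const_mul hc, iteratedDeriv_eq_iterate]
  beta_reduce
  rw [Polynomial.deriv_gaussian_eq_hermite_mul_gaussian]
  have : Real.exp (-((Real.sqrt (2 * a) * x) ^ 2 / 2)) = gauss a x := by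
    rw [gauss_eq_comp a ha.le]
  rw [this]; ring


lemma sqrt_two_mul_sq {a : ℝ} (ha : 0 < a) : Real.sqrt (2*a) ^ 2 = 2 * a :=
  Real.sq_sqrt (by linarith)

lemma gauss_zero (a : ℝ) : gauss a 0 = 1 := by simp [gauss]

lemma aeval_zero_int (p : Polynomial ℤ) :
    Polynomial.aeval (0:ℝ) p = ((p.coeff 0 : ℤ) : ℝ) := by
  rw [Polynomial.aeval_def, ← Polynomial.eval_map, ← Polynomial.coeff_zero_eq_eval_zero,
    Polynomial.coeff_map]
  simp

lemma q_even_zero {a : ℝ} (ha : 0 < a) (j : ℕ) :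
    iteratedDeriv (2*j) (gauss a) 0 = (-(2*a))^j * ((2*j-1)‼ : ℕ) := by
  have hco := Polynomial.coeff_hermite_explicit j 0
  rw [add_zero, Nat.choose_zero_right] at hco
  rw [gauss_repr a ha, gauss_zero, mul_zero, aeval_zero_int, hco]
  have h1 : Real.sqrt (2*a) ^ (2*j) = (2*a)^j := by
    rw [pow_mul, sqrt_two_mul_sq ha]
  have h2 : ((-1:ℝ)) ^ (2*j) = 1 := by
    rw [pow_mul]; norm_num
  rw [h1, h2]
  push_cast
  rw [neg_pow, neg_pow (2*a)]
  ring

lemma q_odd_zero {a : ℝ} (ha : 0 < a) (j : ℕ) :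
    iteratedDeriv (2*j+1) (gauss a) 0 = 0 := by
  rw [gauss_repr a ha, gauss_zero, mul_zero, aeval_zero_int,
    Polynomial.coeff_hermite_of_odd_add (n := 2*j+1) (k := 0) (by simpa using odd_two_mul_add_one j)]
  simp

lemma q_zero_zero (a : ℝ) : iteratedDeriv 0 (gauss a) 0 = 1 := by
  rw [iteratedDeriv_zero, gauss_zero]

/-- single exponential-series term bound : `x^i ≤ i! * exp x` for `x ≥ 0`. -/
lemma pow_le_factorial_mul_exp {x : ℝ} (hx : 0 ≤ x) (i : ℕ) :
    x ^ i ≤ (i.factorial : ℝ) * Real.exp x := by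
  have h1 : x ^ i / (i.factorial : ℝ) ≤ Real.exp x := by
    calc x ^ i / (i.factorial : ℝ)
        ≤ ∑ m ∈ Finset.range (i+1), x ^ m / (m.factorial : ℝ) := by
          refine Finset.single_le_sum (f := fun m => x ^ m / (m.factorial : ℝ)) ?_ ?_
          · intro m _
            positivity
          · simp
      _ ≤ Real.exp x := Real.sum_le_exp_of_nonneg hx _
  have hfac : (0:ℝ) < (i.factorial : ℝ) := by positivity
  calc x ^ i = x ^ i / (i.factorial : ℝ) * (i.factorial : ℝ) := by field_simp
    _ ≤ Real.exp x * (i.factorial : ℝ) := by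
        exact mul_le_mul_of_nonneg_right h1 hfac.le
    _ = (i.factorial : ℝ) * Real.exp x := by ring

lemma abs_pow_mul_gauss_le {b : ℝ} (hb : 0 < b) (i : ℕ) (y : ℝ) :
    |y| ^ i * Real.exp (-(b * y ^ 2)) ≤ 1 + (i.factorial : ℝ) / b ^ i := by
  have hexp : Real.exp (-(b * y ^ 2)) ≤ 1 := by
    rw [Real.exp_le_one_iff]
    nlinarith [sq_nonneg y]
  have hsq : (y^2) ^ i * Real.exp (-(b * y ^ 2)) ≤ (i.factorial : ℝ) / b ^ i := by
    have h := pow_le_factorial_mul_exp (x := b * y^2) (by positivity) i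
    have hb' : (0:ℝ) < b ^ i := by positivity
    have hkey : (y^2)^i ≤ (i.factorial : ℝ) / b^i * Real.exp (b * y^2) := by
      rw [mul_pow] at h
      rw [div_mul_eq_mul_div, le_div_iff₀ hb']
      nlinarith [h]
    calc (y^2) ^ i * Real.exp (-(b * y ^ 2))
        ≤ ((i.factorial : ℝ) / b^i * Real.exp (b * y^2)) * Real.exp (-(b * y ^ 2)) := by
          exact mul_le_mul_of_nonneg_right hkey (Real.exp_nonneg _)
      _ = (i.factorial : ℝ) / b^i := by
          rw [mul_assoc, ← Real.exp_add]
          simp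
  rcases le_total (|y|) 1 with h|h
  · have : |y| ^ i ≤ 1 := pow_le_one₀ (abs_nonneg y) h
    calc |y| ^ i * Real.exp (-(b * y ^ 2)) ≤ 1 * 1 :=
          mul_le_mul this hexp (Real.exp_nonneg _) zero_le_one
      _ = 1 := one_mul 1
      _ ≤ 1 + (i.factorial : ℝ) / b ^ i := le_add_of_nonneg_right (by positivity)
  · have h1 : |y| ^ i ≤ (y^2) ^ i := by
      apply pow_le_pow_left₀ (abs_nonneg y)
      nlinarith [abs_nonneg y, sq_abs y]
    calc |y| ^ i * Real.exp (-(b * y ^ 2)) ≤ (y^2)^i * Real.exp (-(b * y ^ 2)) :=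
          mul_le_mul_of_nonneg_right h1 (Real.exp_nonneg _)
      _ ≤ (i.factorial : ℝ) / b ^ i := hsq
      _ ≤ 1 + (i.factorial : ℝ) / b ^ i := by linarith

lemma exists_bound_poly_gauss (P : Polynomial ℝ) {b : ℝ} (hb : 0 < b) :
    ∃ B : ℝ, ∀ y : ℝ, |P.eval y| * Real.exp (-(b * y ^ 2)) ≤ B := by
  refine ⟨∑ i ∈ Finset.range (P.natDegree + 1), |P.coeff i| * (1 + (i.factorial : ℝ) / b ^ i), ?_⟩
  intro y
  have h1 : |P.eval y| ≤ ∑ i ∈ Finset.range (P.natDegree + 1), |P.coeff i| * |y| ^ i := by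
    rw [Polynomial.eval_eq_sum_range]
    refine (Finset.abs_sum_le_sum_abs _ _).trans ?_
    apply Finset.sum_le_sum
    intro i _
    rw [abs_mul, abs_pow]
  calc |P.eval y| * Real.exp (-(b * y ^ 2))
      ≤ (∑ i ∈ Finset.range (P.natDegree + 1), |P.coeff i| * |y| ^ i) *
          Real.exp (-(b * y ^ 2)) :=
        mul_le_mul_of_nonneg_right h1 (Real.exp_nonneg _)
    _ = ∑ i ∈ Finset.range (P.natDegree + 1),
          |P.coeff i| * (|y| ^ i * Real.exp (-(b * y ^ 2))) := by
        rw [Finset.sum_mul]; congr 1; funext i; ring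
    _ ≤ ∑ i ∈ Finset.range (P.natDegree + 1), |P.coeff i| * (1 + (i.factorial : ℝ) / b ^ i) := by
        apply Finset.sum_le_sum
        intro i _
        exact mul_le_mul_of_nonneg_left (abs_pow_mul_gauss_le hb i y) (abs_nonneg _)

lemma gauss_deriv_bounded {a : ℝ} (ha : 0 < a) (n : ℕ) :
    ∃ B : ℝ, ∀ x : ℝ, |iteratedDeriv n (gauss a) x| ≤ B := by
  have hc0 : 0 < Real.sqrt (2*a) := Real.sqrt_pos.mpr (by linarith)
  obtain ⟨B₀, hB₀⟩ := exists_bound_poly_gauss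
    ((Polynomial.hermite n).map (Int.castRingHom ℝ)) (b := (1:ℝ)/2) (by norm_num)
  refine ⟨Real.sqrt (2*a) ^ n * B₀, ?_⟩
  intro x
  have haev : Polynomial.aeval (Real.sqrt (2*a) * x) (Polynomial.hermite n)
      = ((Polynomial.hermite n).map (Int.castRingHom ℝ)).eval (Real.sqrt (2*a) * x) := by
    rw [Polynomial.eval_map, Polynomial.aeval_def]
    rfl
  have hgauss : gauss a x = Real.exp (-((1:ℝ)/2 * (Real.sqrt (2*a)*x) ^ 2)) := by
    rw [gauss]
    congr 1
    rw [mul_pow, sqrt_two_mul_sq ha]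
    ring
  rw [gauss_repr a ha n x, haev, hgauss, abs_mul, abs_mul, abs_mul, abs_pow, abs_pow,
    abs_neg, abs_one, one_pow, one_mul, Real.abs_exp, abs_of_nonneg (Real.sqrt_nonneg _),
    mul_assoc]
  exact mul_le_mul_of_nonneg_left (hB₀ _) (by positivity)


def mom (b : ℝ) (n : ℕ) : ℝ := ∫ s : ℝ, s ^ n * Real.exp (-(b * s ^ 2))

lemma integrableOn_pow_gauss {b : ℝ} (hb : 0 < b) (n : ℕ) :
    IntegrableOn (fun x : ℝ => x ^ n * Real.exp (-(b * x ^ 2))) (Set.Ioi 0) := by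
  have h := integrableOn_rpow_mul_exp_neg_mul_sq hb (s := (n : ℝ))
    (neg_one_lt_zero.trans_le (Nat.cast_nonneg n))
  refine h.congr_fun ?_ measurableSet_Ioi
  intro x _
  simp only [Real.rpow_natCast, neg_mul]

lemma mom_zero_pos {b : ℝ} (hb : 0 < b) : 0 < mom b 0 := by
  have : mom b 0 = Real.sqrt (π / b) := by
    rw [mom, ← integral_gaussian b]
    congr 1
    funext s
    rw [pow_zero, one_mul, neg_mul]
  rw [this]
  exact Real.sqrt_pos.mpr (by positivity)

lemma mom_even_eq_two_mul {b : ℝ} (j : ℕ) :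
    mom b (2*j) = 2 * ∫ x in Set.Ioi (0:ℝ), x ^ (2*j) * Real.exp (-(b * x ^ 2)) := by
  have h1 : mom b (2*j) = ∫ s : ℝ, |s| ^ (2*j) * Real.exp (-(b * |s| ^ 2)) := by
    rw [mom]
    congr 1
    funext s
    rw [pow_mul, ← sq_abs, ← pow_mul]
  rw [h1]
  exact integral_comp_abs (f := fun u : ℝ => u ^ (2*j) * Real.exp (-(b * u ^ 2)))

lemma ioi_pow_gauss_rec {b : ℝ} (hb : 0 < b) (j : ℕ) :
    2 * b * ∫ x in Set.Ioi (0:ℝ), x ^ (2*j+2) * Real.exp (-(b * x ^ 2)) =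
      (2*j+1) * ∫ x in Set.Ioi (0:ℝ), x ^ (2*j) * Real.exp (-(b * x ^ 2)) := by
  set F : ℝ → ℝ := fun x => x ^ (2*j+1) * Real.exp (-(b * x ^ 2)) with hF
  set G1 : ℝ → ℝ := fun x => x ^ (2*j) * Real.exp (-(b * x ^ 2)) with hG1
  set G2 : ℝ → ℝ := fun x => x ^ (2*j+2) * Real.exp (-(b * x ^ 2)) with hG2
  have hderiv : ∀ x ∈ Set.Ici (0:ℝ), HasDerivAt F
      ((2*j+1) * G1 x - 2 * b * G2 x) x := by
    intro x _
    have h1 : HasDerivAt (fun x : ℝ => x ^ (2*j+1)) ((2*j+1) * x ^ (2*j)) x := by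
      simpa using hasDerivAt_pow (2*j+1) x
    have h2 : HasDerivAt (fun x : ℝ => Real.exp (-(b * x ^ 2)))
        (Real.exp (-(b * x ^ 2)) * (-(b * (2 * x)))) x := by
      apply HasDerivAt.exp
      have : HasDerivAt (fun x : ℝ => b * x ^ 2) (b * (2 * x)) x := by
        simpa using (hasDerivAt_pow 2 x).const_mul b
      exact this.neg
    have := h1.mul h2
    refine this.congr_deriv ?_
    simp only [hG1, hG2]
    ring
  have hi1 : IntegrableOn G1 (Set.Ioi 0) := integrableOn_pow_gauss hb (2*j)
  have hi2 : IntegrableOn G2 (Set.Ioi 0) := integrableOn_pow_gauss hb (2*j+2)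
  have hint : IntegrableOn (fun x : ℝ => (2*j+1) * G1 x - 2 * b * G2 x) (Set.Ioi 0) :=
    (hi1.const_mul _).sub (hi2.const_mul _)
  have htend : Tendsto F atTop (nhds 0) := by
    have hlo := rpow_mul_exp_neg_mul_sq_isLittleO_exp_neg hb (s := ((2*j+1 : ℕ) : ℝ))
    have heq : (fun x : ℝ => x ^ (((2*j+1 : ℕ)) : ℝ) * Real.exp (-b * x ^ 2)) =ᶠ[atTop] F := by
      filter_upwards with x
      rw [hF]
      simp only [Real.rpow_natCast, neg_mul]
    have hg : Tendsto (fun x : ℝ => Real.exp (-(1/2) * x)) atTop (nhds 0) := by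
      have hcomp : Tendsto (fun x : ℝ => (1/2) * x) atTop atTop :=
        Tendsto.const_mul_atTop (by norm_num) tendsto_id
      have := Real.tendsto_exp_neg_atTop_nhds_zero.comp hcomp
      refine this.congr fun x => ?_
      simp [Function.comp, neg_mul]
    exact (hlo.congr' heq (EventuallyEq.refl _ _)).trans_tendsto hg
  have key := integral_Ioi_of_hasDerivAt_of_tendsto' (a := 0) (f := F)
    (fun x hx => hderiv x hx) hint htend
  have hF0 : F 0 = 0 := by
    rw [hF]
    simp
  rw [hF0, sub_zero] at key
  have hsplit : ∫ x in Set.Ioi (0:ℝ), ((2*j+1) * G1 x - 2 * b * G2 x) =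
      (2*j+1) * (∫ x in Set.Ioi (0:ℝ), G1 x) - 2 * b * ∫ x in Set.Ioi (0:ℝ), G2 x := by
    rw [integral_sub (hi1.const_mul _) (hi2.const_mul _),
      integral_const_mul, integral_const_mul]
  rw [hsplit] at key
  rw [hG1, hG2] at key
  linarith [key]

lemma mom_rec {b : ℝ} (hb : 0 < b) (j : ℕ) :
    mom b (2*(j+1)) = (2*j+1) / (2*b) * mom b (2*j) := by
  have h2 : (2*(j+1)) = 2*j+2 := by ring
  rw [h2, show (2*j+2 : ℕ) = 2*j+2 from rfl]
  have e1 := mom_even_eq_two_mul (b := b) (j+1)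
  have e2 := mom_even_eq_two_mul (b := b) j
  have hrec := ioi_pow_gauss_rec hb j
  have hb' : (2*b) ≠ 0 := by positivity
  rw [show 2*(j+1) = 2*j+2 by ring] at e1
  rw [e1, e2]
  field_simp
  linarith [hrec]

lemma mom_even_pos {b : ℝ} (hb : 0 < b) (j : ℕ) : 0 < mom b (2*j) := by
  induction j with
  | zero => simpa using mom_zero_pos hb
  | succ j ih =>
    rw [mom_rec hb j]
    have : (0:ℝ) < (2*j+1) / (2*b) := by positivity
    positivity


section ProdFormula
variable {d : ℕ}

lemma pd_const_mul_prod (c : ℝ) (h : Fin d → ℝ → ℝ) (hh : ∀ j, ContDiff ℝ (⊤:ℕ∞) (h j))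
    (i : Fin d) :
    pd d i (fun z => c * ∏ j, h j (z j)) =
      fun z => c * ∏ j, Function.update h i (deriv (h i)) j (z j) := by
  funext x
  have hj : ∀ j : Fin d, HasFDerivAt (fun z : EuclideanSpace ℝ (Fin d) => h j (z j))
      ((deriv (h j) (x j)) • (EuclideanSpace.proj j : EuclideanSpace ℝ (Fin d) →L[ℝ] ℝ)) x := by
    intro j
    have hproj : HasFDerivAt (fun z : EuclideanSpace ℝ (Fin d) => z j)
        (EuclideanSpace.proj j : EuclideanSpace ℝ (Fin d) →L[ℝ] ℝ) x :=
      (EuclideanSpace.proj j :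
        EuclideanSpace ℝ (Fin d) →L[ℝ] ℝ).hasFDerivAt
    exact ((((hh j).differentiable (by simp)) (x j)).hasDerivAt).comp_hasFDerivAt x hproj
  have hprod : HasFDerivAt (fun z : EuclideanSpace ℝ (Fin d) => c * ∏ j, h j (z j))
      (c • ∑ j, (∏ l ∈ Finset.univ.erase j, h l (x l)) •
        ((deriv (h j) (x j)) • (EuclideanSpace.proj j : EuclideanSpace ℝ (Fin d) →L[ℝ] ℝ))) x :=
    (HasFDerivAt.finset_prod (fun j _ => hj j)).const_mul c
  have hval : pd d i (fun z : EuclideanSpace ℝ (Fin d) => c * ∏ j, h j (z j)) x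
      = (c • ∑ j, (∏ l ∈ Finset.univ.erase j, h l (x l)) •
        ((deriv (h j) (x j)) • (EuclideanSpace.proj j : EuclideanSpace ℝ (Fin d) →L[ℝ] ℝ)))
          (EuclideanSpace.single i 1) := by
    rw [pd, hprod.fderiv]
  rw [hval]
  simp only [ContinuousLinearMap.smul_apply, ContinuousLinearMap.coe_sum', Finset.sum_apply,
    smul_eq_mul]
  rw [Finset.sum_eq_single i]
  · have hproj : (EuclideanSpace.proj i : EuclideanSpace ℝ (Fin d) →L[ℝ] ℝ)
        (EuclideanSpace.single i 1) = 1 := by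
      simp [EuclideanSpace.single_apply]
    rw [hproj, mul_one]
    have hsplit : (∏ j, Function.update h i (deriv (h i)) j (x j))
        = deriv (h i) (x i) * ∏ l ∈ Finset.univ.erase i, h l (x l) := by
      rw [← Finset.mul_prod_erase Finset.univ
        (fun j => Function.update h i (deriv (h i)) j (x j)) (Finset.mem_univ i)]
      congr 1
      · rw [Function.update_self]
      · apply Finset.prod_congr rfl
        intro l hl
        rw [Function.update_of_ne (Finset.ne_of_mem_erase hl)]
    rw [hsplit]
    ring
  · intro j _ hji
    have hproj : (EuclideanSpace.proj j : EuclideanSpace ℝ (Fin d) →L[ℝ] ℝ)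
        (EuclideanSpace.single i 1) = 0 := by
      simp [EuclideanSpace.single_apply, hji]
    rw [hproj]
    ring
  · intro hi
    exact absurd (Finset.mem_univ i) hi

lemma contDiff_update {h : Fin d → ℝ → ℝ} (hh : ∀ j, ContDiff ℝ (⊤:ℕ∞) (h j)) (i : Fin d)
    (n : ℕ) (j : Fin d) :
    ContDiff ℝ (⊤:ℕ∞) (Function.update h i (iteratedDeriv n (h i)) j) := by
  rcases eq_or_ne j i with rfl | hji
  · rw [Function.update_self, iteratedDeriv_eq_iterate]
    exact ContDiff.iterate_deriv n (hh j)
  · rw [Function.update_of_ne hji]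
    exact hh j

lemma pd_iter_prod (c : ℝ) (h : Fin d → ℝ → ℝ) (hh : ∀ j, ContDiff ℝ (⊤:ℕ∞) (h j))
    (i : Fin d) (n : ℕ) :
    (pd d i)^[n] (fun z => c * ∏ j, h j (z j)) =
      fun z => c * ∏ j, Function.update h i (iteratedDeriv n (h i)) j (z j) := by
  induction n with
  | zero =>
    simp [iteratedDeriv_zero, Function.update_eq_self]
  | succ n ih =>
    rw [Function.iterate_succ_apply', ih,
      pd_const_mul_prod c _ (contDiff_update hh i n) i]
    funext z
    congr 1
    apply Finset.prod_congr rfl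
    intro j _
    congr 1
    rw [Function.update_self, ← iteratedDeriv_succ, Function.update_idem]

lemma foldr_pd_prod (α : Fin d → ℕ) (c : ℝ) (h : Fin d → ℝ → ℝ)
    (hh : ∀ j, ContDiff ℝ (⊤:ℕ∞) (h j)) :
    ∀ l : List (Fin d), l.Nodup →
    ((l.map (fun i => (pd d i)^[α i])).foldr (· ∘ ·) id) (fun z => c * ∏ j, h j (z j)) =
      fun z => c * ∏ j, (if j ∈ l then iteratedDeriv (α j) (h j) else h j) (z j) := by
  intro l
  induction l generalizing h with
  | nil =>
    intro _
    simp
  | cons i l ih =>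
    intro hnd
    have hndl : l.Nodup := (List.nodup_cons.mp hnd).2
    have hnmem : i ∉ l := (List.nodup_cons.mp hnd).1
    simp only [List.map_cons, List.foldr_cons, Function.comp_apply]
    rw [ih h hh hndl]
    set h' : Fin d → ℝ → ℝ := fun j => if j ∈ l then iteratedDeriv (α j) (h j) else h j with hh'
    have hh'c : ∀ j, ContDiff ℝ (⊤:ℕ∞) (h' j) := by
      intro j
      rw [hh']
      by_cases hj : j ∈ l
      · simp only [hj, if_true, iteratedDeriv_eq_iterate]
        exact ContDiff.iterate_deriv _ (hh j)
      · simp only [hj, if_false]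
        exact hh j
    rw [pd_iter_prod c h' hh'c i (α i)]
    funext z
    congr 1
    apply Finset.prod_congr rfl
    intro j _
    rcases eq_or_ne j i with rfl | hji
    · rw [Function.update_self]
      have : h' j = h j := by
        rw [hh']
        simp [hnmem]
      rw [this]
      simp [List.mem_cons]
    · rw [Function.update_of_ne hji, hh']
      by_cases hj : j ∈ l
      · simp [hj, List.mem_cons, hji]
      · simp [hj, List.mem_cons, hji]

lemma Dmul_prod (α : Fin d → ℕ) (c : ℝ) (h : Fin d → ℝ → ℝ)
    (hh : ∀ j, ContDiff ℝ (⊤:ℕ∞) (h j)) :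
    Dmul d α (fun z => c * ∏ j, h j (z j)) =
      fun z => c * ∏ j, iteratedDeriv (α j) (h j) (z j) := by
  rw [Dmul, foldr_pd_prod α c h hh (List.finRange d) (List.nodup_finRange d)]
  funext z
  congr 1
  apply Finset.prod_congr rfl
  intro j _
  simp [List.mem_finRange]

lemma norm_sq_eq_sum (z : EuclideanSpace ℝ (Fin d)) : ‖z‖ ^ 2 = ∑ j, (z j) ^ 2 := by
  rw [EuclideanSpace.norm_eq, Real.sq_sqrt]
  · apply Finset.sum_congr rfl
    intro j _
    rw [Real.norm_eq_abs, sq_abs]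
  · positivity

lemma heatKernel_prod (t : ℝ) (ht : 0 < t) :
    (fun z : EuclideanSpace ℝ (Fin d) => heatKernel d z t) =
      fun z => (4*π*t) ^ (-(d:ℝ)/2) * ∏ j, gauss (1/(4*t)) (z j) := by
  funext z
  rw [heatKernel]
  congr 1
  simp only [gauss]
  rw [← Real.exp_sum]
  congr 1
  rw [norm_sq_eq_sum]
  have : ∑ j, -(1/(4*t) * (z j)^2) = -(1/(4*t)) * ∑ j, (z j)^2 := by
    rw [Finset.mul_sum]
    apply Finset.sum_congr rfl
    intro j _
    ring
  rw [this]
  field_simp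

lemma Dmul_heatKernel (t : ℝ) (ht : 0 < t) (α : Fin d → ℕ) (x : EuclideanSpace ℝ (Fin d)) :
    Dmul d α (fun z => heatKernel d z t) x =
      (4*π*t) ^ (-(d:ℝ)/2) * ∏ j, iteratedDeriv (α j) (gauss (1/(4*t))) (x j) := by
  rw [heatKernel_prod t ht, Dmul_prod α _ _ (fun j => contDiff_gauss _)]

end ProdFormula


section Value
variable {d : ℕ}

lemma exp_neg_norm_sq (s : ℝ) (hs : 0 < s) (y : EuclideanSpace ℝ (Fin d)) :
    Real.exp (-‖y‖^2/(4*s)) = ∏ i, Real.exp (-(1/(4*s) * (y i)^2)) := by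
  rw [← Real.exp_sum]
  congr 1
  rw [norm_sq_eq_sum]
  have : ∑ j, -(1/(4*s) * (y j)^2) = -(1/(4*s)) * ∑ j, (y j)^2 := by
    rw [Finset.mul_sum]
    apply Finset.sum_congr rfl
    intro j _
    ring
  rw [this]
  field_simp

lemma integral_prod_pow_gauss (C t₀ : ℝ) (ht₀ : 0 < t₀) (α : Fin d → ℕ) :
    ∫ y : EuclideanSpace ℝ (Fin d), (∏ i, y i ^ α i) * (C * Real.exp (-‖y‖^2/(4*t₀)))
      = C * ∏ i, mom (1/(4*t₀)) (α i) := by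
  have hpt : ∀ y : EuclideanSpace ℝ (Fin d),
      (∏ i, y i ^ α i) * (C * Real.exp (-‖y‖^2/(4*t₀)))
        = C * ∏ i, ((y i) ^ (α i) * Real.exp (-(1/(4*t₀) * (y i)^2))) := by
    intro y
    rw [exp_neg_norm_sq t₀ ht₀ y, Finset.prod_mul_distrib]
    ring
  simp only [hpt]
  have hmp := (EuclideanSpace.volume_preserving_symm_measurableEquiv_toLp (Fin d)).symm
  rw [← hmp.integral_comp']
  have hcoord : ∀ (x : Fin d → ℝ) (i : Fin d),
      ((MeasurableEquiv.toLp 2 (Fin d → ℝ)).symm.symm x) i = x i := fun x i => rfl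
  simp only [hcoord]
  rw [MeasureTheory.integral_const_mul]
  rw [volume_pi, MeasureTheory.integral_fintype_prod_eq_prod (ι := Fin d)
    (f := fun i (u : ℝ) => u ^ (α i) * Real.exp (-(1/(4*t₀) * u^2)))]
  rfl

def wcoef (a b : ℝ) (n : ℕ) : ℝ :=
  (-1 : ℝ)^n * mom b n * iteratedDeriv n (gauss a) 0 / n.factorial

lemma heatApprox_zero (k : ℕ) (C t₀ t : ℝ) (ht : 0 < t) (ht₀ : 0 < t₀) :
    heatApprox d k (fun y => C * Real.exp (-‖y‖^2/(4*t₀))) 0 t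
      = (4*π*t) ^ (-(d:ℝ)/2) * C *
        ∑ j ∈ Finset.range (k+1), ∑ α ∈ Finset.Nat.antidiagonalTuple d j,
          ∏ i, wcoef (1/(4*t)) (1/(4*t₀)) (α i) := by
  rw [heatApprox, Finset.mul_sum]
  apply Finset.sum_congr rfl
  intro j _
  rw [Finset.mul_sum]
  apply Finset.sum_congr rfl
  intro α _
  rw [integral_prod_pow_gauss C t₀ ht₀ α, Dmul_heatKernel t ht α 0]
  have hzero : ∀ i : Fin d, (0 : EuclideanSpace ℝ (Fin d)) i = 0 := fun i => rfl
  simp only [hzero]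
  have hsign : (-1 : ℝ) ^ (∑ i, α i) = ∏ i, (-1 : ℝ) ^ (α i) :=
    (Finset.prod_pow_eq_pow_sum _ _ _).symm
  rw [hsign]
  rw [show (∏ i, wcoef (1/(4*t)) (1/(4*t₀)) (α i))
      = (∏ i, (-1:ℝ)^(α i)) * (∏ i, mom (1/(4*t₀)) (α i)) *
        (∏ i, iteratedDeriv (α i) (gauss (1/(4*t))) 0) / ∏ i, ((α i).factorial : ℝ) by
    rw [← Finset.prod_mul_distrib, ← Finset.prod_mul_distrib, ← Finset.prod_div_distrib]
    rfl]
  field_simp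

end Value


section Combinatorics
variable {d : ℕ} {a b : ℝ}

lemma wcoef_odd (ha : 0 < a) (b : ℝ) (j : ℕ) : wcoef a b (2*j+1) = 0 := by
  rw [wcoef, q_odd_zero ha]
  simp

lemma wcoef_odd' (ha : 0 < a) (b : ℝ) {n : ℕ} (hn : Odd n) : wcoef a b n = 0 := by
  obtain ⟨j, hj⟩ := hn
  rw [show n = 2*j+1 by omega]
  exact wcoef_odd ha b j

def ucoef (a b : ℝ) (j : ℕ) : ℝ := (-1 : ℝ)^j * wcoef a b (2*j)

lemma wcoef_two_mul (j : ℕ) : wcoef a b (2*j) = (-1 : ℝ)^j * ucoef a b j := by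
  rw [ucoef, ← mul_assoc, ← mul_pow]
  simp

lemma ucoef_eq (ha : 0 < a) (j : ℕ) :
    ucoef a b j = mom b (2*j) * (2*a)^j * ((2*j-1)‼ : ℕ) / ((2*j).factorial : ℕ) := by
  rw [ucoef, wcoef, q_even_zero ha]
  have h1 : ((-1:ℝ))^(2*j) = 1 := by rw [pow_mul]; norm_num
  have h2 : (-(2*a))^j = (-1:ℝ)^j * (2*a)^j := by rw [neg_pow]
  rw [h1, h2]
  have h3 : ((-1:ℝ))^j * (-1:ℝ)^j = 1 := by
    rw [← pow_add, ← two_mul, pow_mul]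
    norm_num
  linear_combination (mom b (2*j) * (2*a)^j * (((2*j-1)‼ : ℕ) : ℝ) /
    (((2*j).factorial : ℕ) : ℝ)) * h3

lemma ucoef_pos (ha : 0 < a) (hb : 0 < b) (j : ℕ) : 0 < ucoef a b j := by
  rw [ucoef_eq ha]
  have := mom_even_pos hb j
  have h1 : (0:ℝ) < ((2*j-1)‼ : ℕ) := by exact_mod_cast Nat.doubleFactorial_pos _
  have h2 : (0:ℝ) < ((2*j).factorial : ℕ) := by exact_mod_cast Nat.factorial_pos _
  positivity

lemma ucoef_succ (ha : 0 < a) (hb : 0 < b) (j : ℕ) :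
    ucoef a b (j+1) = (a/b) * ((2*j+1)/(2*j+2)) * ucoef a b j := by
  rw [ucoef_eq ha, ucoef_eq ha]
  have hm : mom b (2*(j+1)) = (2*j+1) / (2*b) * mom b (2*j) := mom_rec hb j
  have hdf : (2*(j+1)-1)‼ = (2*j+1) * (2*j-1)‼ := by
    rw [show 2*(j+1)-1 = 2*j+1 by omega]
    exact Nat.doubleFactorial_add_one (2*j)
  have hfact : (2*(j+1)).factorial = (2*j+2) * ((2*j+1) * (2*j).factorial) := by
    rw [show 2*(j+1) = (2*j+1)+1 by ring, Nat.factorial_succ, Nat.factorial_succ]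
  rw [hm, hdf, hfact]
  have hf0 : ((2*j).factorial : ℝ) ≠ 0 := by exact_mod_cast Nat.factorial_ne_zero _
  have hb0 : (b:ℝ) ≠ 0 := ne_of_gt hb
  push_cast
  field_simp
  ring

def Wsum (a b : ℝ) (d j : ℕ) : ℝ :=
  ∑ α ∈ Finset.Nat.antidiagonalTuple d j, ∏ i, wcoef a b (α i)

def Vsum (a b : ℝ) (d m : ℕ) : ℝ :=
  ∑ β ∈ Finset.Nat.antidiagonalTuple d m, ∏ i, ucoef a b (β i)

lemma Wsum_odd (ha : 0 < a) {j : ℕ} (hj : Odd j) : Wsum a b d j = 0 := by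
  rw [Wsum]
  apply Finset.sum_eq_zero
  intro α hα
  rw [Finset.Nat.mem_antidiagonalTuple] at hα
  have hodd : ∃ i : Fin d, Odd (α i) := by
    by_contra hcon
    push_neg at hcon
    have heven : Even (∑ i, α i) :=
      Finset.even_sum _ fun i _ => Nat.not_odd_iff_even.mp (hcon i)
    rw [hα] at heven
    exact (Nat.not_odd_iff_even.mpr heven) hj
  obtain ⟨i, hi⟩ := hodd
  exact Finset.prod_eq_zero (Finset.mem_univ i) (wcoef_odd' ha b hi)

lemma Wsum_even (ha : 0 < a) (m : ℕ) :
    Wsum a b d (2*m) = (-1 : ℝ)^m * Vsum a b d m := by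
  rw [Wsum]
  have hfilter : ∑ α ∈ Finset.Nat.antidiagonalTuple d (2*m), ∏ i, wcoef a b (α i)
      = ∑ α ∈ (Finset.Nat.antidiagonalTuple d (2*m)).filter (fun α => ∀ i, Even (α i)),
          ∏ i, wcoef a b (α i) := by
    symm
    apply Finset.sum_filter_of_ne
    intro α _ hne i
    by_contra hodd
    exact hne (Finset.prod_eq_zero (Finset.mem_univ i)
      (wcoef_odd' ha b (Nat.odd_iff.mpr (Nat.not_even_iff.mp hodd))))
  rw [hfilter]
  have hbij : ∑ α ∈ (Finset.Nat.antidiagonalTuple d (2*m)).filter (fun α => ∀ i, Even (α i)),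
      ∏ i, wcoef a b (α i)
      = ∑ β ∈ Finset.Nat.antidiagonalTuple d m, ∏ i, wcoef a b (2 * β i) := by
    apply Finset.sum_nbij' (i := fun α => fun i => α i / 2) (j := fun β => fun i => 2 * β i)
    · intro α hα
      rw [Finset.mem_filter, Finset.Nat.mem_antidiagonalTuple] at hα
      rw [Finset.Nat.mem_antidiagonalTuple]
      obtain ⟨hsum, heven⟩ := hα
      have : ∀ i : Fin d, 2 * (α i / 2) = α i := fun i => Nat.two_mul_div_two_of_even (heven i)
      have h2 : 2 * (∑ i, α i / 2) = 2 * m := by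
        rw [Finset.mul_sum]
        simp only [this]
        omega
      omega
    · intro β hβ
      rw [Finset.Nat.mem_antidiagonalTuple] at hβ
      rw [Finset.mem_filter, Finset.Nat.mem_antidiagonalTuple]
      constructor
      · rw [← Finset.mul_sum, hβ]
      · intro i
        exact even_two_mul _
    · intro α hα
      rw [Finset.mem_filter] at hα
      funext i
      exact Nat.two_mul_div_two_of_even (hα.2 i)
    · intro β _
      funext i
      show 2 * β i / 2 = β i
      omega
    · intro α hα
      rw [Finset.mem_filter] at hα
      apply Finset.prod_congr rfl
      intro i _
      rw [Nat.two_mul_div_two_of_even (hα.2 i)]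
  rw [hbij]
  rw [Vsum, Finset.mul_sum]
  apply Finset.sum_congr rfl
  intro β hβ
  rw [Finset.Nat.mem_antidiagonalTuple] at hβ
  calc ∏ i, wcoef a b (2 * β i) = ∏ i, ((-1:ℝ)^(β i) * ucoef a b (β i)) := by
        apply Finset.prod_congr rfl
        intro i _
        exact wcoef_two_mul (β i)
    _ = (∏ i, (-1:ℝ)^(β i)) * ∏ i, ucoef a b (β i) := Finset.prod_mul_distrib
    _ = (-1:ℝ)^m * ∏ i, ucoef a b (β i) := by
        rw [Finset.prod_pow_eq_pow_sum, hβ]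

end Combinatorics


section Growth
variable {d : ℕ} {a b : ℝ}

lemma antidiagonalTuple_nonempty (hd : 1 ≤ d) (m : ℕ) :
    (Finset.Nat.antidiagonalTuple d m).Nonempty := by
  refine ⟨fun i => if i = (⟨0, hd⟩ : Fin d) then m else 0, ?_⟩
  rw [Finset.Nat.mem_antidiagonalTuple]
  simp

lemma Vsum_pos (ha : 0 < a) (hb : 0 < b) (hd : 1 ≤ d) (m : ℕ) : 0 < Vsum a b d m :=
  Finset.sum_pos (fun β _ => Finset.prod_pos fun i _ => ucoef_pos ha hb _)
    (antidiagonalTuple_nonempty hd m)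

lemma Vsum_ratio (ha : 0 < a) (hb : 0 < b) (hd : 1 ≤ d) (N m : ℕ) (hm : d * N ≤ m) :
    (a/b) * ((2*N+1)/(2*N+2)) * Vsum a b d m ≤ Vsum a b d (m+1) := by
  classical
  have hmax : ∀ β : Fin d → ℕ, ∃ i : Fin d, ∀ j : Fin d, β j ≤ β i := by
    intro β
    have : Nonempty (Fin d) := ⟨⟨0, hd⟩⟩
    obtain ⟨i, _, hi⟩ := Finset.exists_max_image Finset.univ β Finset.univ_nonempty
    exact ⟨i, fun j => hi j (Finset.mem_univ j)⟩
  choose imax himax using hmax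
  set g : (Fin d → ℕ) → (Fin d → ℕ) :=
    fun β => Function.update β (imax β) (β (imax β) + 1) with hg
  have hsum_eq : ∀ β : Fin d → ℕ, ∑ i, g β i = (∑ i, β i) + 1 := by
    intro β
    rw [hg]
    rw [Finset.sum_update_of_mem (Finset.mem_univ _)]
    rw [← Finset.add_sum_erase Finset.univ β (Finset.mem_univ (imax β))]
    rw [Finset.sdiff_singleton_eq_erase]
    ring
  have hmem : ∀ β ∈ Finset.Nat.antidiagonalTuple d m,
      g β ∈ Finset.Nat.antidiagonalTuple d (m+1) := by
    intro β hβ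
    rw [Finset.Nat.mem_antidiagonalTuple] at *
    rw [hsum_eq, hβ]
  have hinj : ∀ β₁ ∈ Finset.Nat.antidiagonalTuple d m,
      ∀ β₂ ∈ Finset.Nat.antidiagonalTuple d m, g β₁ = g β₂ → β₁ = β₂ := by
    intro β₁ _ β₂ _ heq
    rcases eq_or_ne (imax β₁) (imax β₂) with hii | hii
    · funext j
      have hθ := congrFun heq j
      rw [hg] at hθ
      simp only at hθ
      rcases eq_or_ne j (imax β₁) with rfl | hj
      · rw [Function.update_self, hii, Function.update_self] at hθ
        rw [hii]
        omega
      · rw [Function.update_of_ne hj, Function.update_of_ne (hii ▸ hj)] at hθ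
        exact hθ
    · exfalso
      have h1 := congrFun heq (imax β₁)
      have h2 := congrFun heq (imax β₂)
      rw [hg] at h1 h2
      simp only at h1 h2
      rw [Function.update_self, Function.update_of_ne hii] at h1
      rw [Function.update_of_ne (Ne.symm hii), Function.update_self] at h2
      have hb1 := himax β₂ (imax β₁)
      have hb2 := himax β₁ (imax β₂)
      omega
  have hterm : ∀ β ∈ Finset.Nat.antidiagonalTuple d m,
      (a/b) * ((2*N+1)/(2*N+2)) * ∏ i, ucoef a b (β i) ≤ ∏ i, ucoef a b (g β i) := by
    intro β hβ
    rw [Finset.Nat.mem_antidiagonalTuple] at hβ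
    have hKge : N ≤ β (imax β) := by
      have hsum_le : ∑ i, β i ≤ d * β (imax β) := by
        calc ∑ i, β i ≤ ∑ _i : Fin d, β (imax β) :=
              Finset.sum_le_sum fun i _ => himax β i
          _ = d * β (imax β) := by
              rw [Finset.sum_const, Finset.card_univ, Fintype.card_fin, smul_eq_mul]
      have := hm.trans (hβ ▸ hsum_le)
      exact Nat.le_of_mul_le_mul_left this (by omega)
    have hprod_g : ∏ i, ucoef a b (g β i)
        = ucoef a b (β (imax β) + 1) * ∏ i ∈ Finset.univ.erase (imax β), ucoef a b (β i) := by
      rw [hg]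
      rw [← Finset.mul_prod_erase Finset.univ _ (Finset.mem_univ (imax β))]
      simp only [Function.update_self]
      congr 1
      apply Finset.prod_congr rfl
      intro i hi
      rw [Function.update_of_ne (Finset.ne_of_mem_erase hi)]
    have hprod_b : ∏ i, ucoef a b (β i)
        = ucoef a b (β (imax β)) * ∏ i ∈ Finset.univ.erase (imax β), ucoef a b (β i) :=
      (Finset.mul_prod_erase Finset.univ _ (Finset.mem_univ (imax β))).symm
    rw [hprod_g, hprod_b, ucoef_succ ha hb]
    set K := β (imax β)
    have hfrac : (2*(N:ℝ)+1)/(2*N+2) ≤ (2*K+1)/(2*K+2) := by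
      rw [div_le_div_iff₀ (by positivity) (by positivity)]
      have : (N:ℝ) ≤ K := by exact_mod_cast hKge
      nlinarith
    have hprod_nonneg : 0 ≤ ∏ i ∈ Finset.univ.erase (imax β), ucoef a b (β i) :=
      Finset.prod_nonneg fun i _ => (ucoef_pos ha hb _).le
    have hub : 0 < ucoef a b K := ucoef_pos ha hb K
    have hab : 0 < a/b := by positivity
    calc (a/b) * ((2*(N:ℝ)+1)/(2*N+2)) * (ucoef a b K * ∏ i ∈ Finset.univ.erase (imax β), ucoef a b (β i))
        ≤ (a/b) * ((2*(K:ℝ)+1)/(2*K+2)) * (ucoef a b K * ∏ i ∈ Finset.univ.erase (imax β), ucoef a b (β i)) := by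
          apply mul_le_mul_of_nonneg_right
          · exact mul_le_mul_of_nonneg_left hfrac hab.le
          · positivity
      _ = a / b * ((2*(K:ℝ)+1)/(2*(K:ℝ)+2)) * ucoef a b K * ∏ i ∈ Finset.univ.erase (imax β), ucoef a b (β i) := by
          ring
  calc (a/b) * ((2*N+1)/(2*N+2)) * Vsum a b d m
      = ∑ β ∈ Finset.Nat.antidiagonalTuple d m,
          (a/b) * ((2*N+1)/(2*N+2)) * ∏ i, ucoef a b (β i) := by
        rw [Vsum, Finset.mul_sum]
    _ ≤ ∑ β ∈ Finset.Nat.antidiagonalTuple d m, ∏ i, ucoef a b (g β i) :=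
        Finset.sum_le_sum hterm
    _ = ∑ γ ∈ (Finset.Nat.antidiagonalTuple d m).image g, ∏ i, ucoef a b (γ i) :=
        (Finset.sum_image (f := fun γ : Fin d → ℕ => ∏ i, ucoef a b (γ i)) hinj).symm
    _ ≤ Vsum a b d (m+1) := by
        rw [Vsum]
        apply Finset.sum_le_sum_of_subset_of_nonneg
        · intro γ hγ
          obtain ⟨β, hβ, rfl⟩ := Finset.mem_image.mp hγ
          exact hmem β hβ
        · intro γ _ _
          exact Finset.prod_nonneg fun i _ => (ucoef_pos ha hb _).le

end Growth



section Diverge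

/-- Abstract divergence of alternating series with eventually geometrically growing terms. -/
lemma alt_sum_diverges (V : ℕ → ℝ) (ρ : ℝ) (hρ : 1 < ρ) (m₀ : ℕ)
    (hpos : ∀ m, 0 < V m) (hratio : ∀ m, m₀ ≤ m → ρ * V m ≤ V (m+1)) :
    Tendsto (fun M => |∑ m ∈ Finset.range (M+1), (-1:ℝ)^m * V m|) atTop atTop := by
  set T : ℕ → ℝ := fun M => ∑ m ∈ Finset.range (M+1), (-1:ℝ)^m * V m with hT
  set K : ℝ := ∑ m ∈ Finset.range (m₀+1), V m with hK
  have hmono : ∀ m, m₀ ≤ m → V m ≤ V (m+1) := by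
    intro m hm
    have h1 := hratio m hm
    nlinarith [hpos m]
  have hgrow : ∀ n : ℕ, ρ^n * V m₀ ≤ V (m₀ + n) := by
    intro n
    induction n with
    | zero => simp
    | succ n ih =>
      have h1 := hratio (m₀ + n) (Nat.le_add_right _ _)
      calc ρ^(n+1) * V m₀ = ρ * (ρ^n * V m₀) := by ring
        _ ≤ ρ * V (m₀ + n) := mul_le_mul_of_nonneg_left ih (by linarith)
        _ ≤ V (m₀ + n + 1) := h1
  have hTm₀ : |T m₀| ≤ K := by
    rw [hT, hK]
    refine (Finset.abs_sum_le_sum_abs _ _).trans ?_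
    apply Finset.sum_le_sum
    intro m _
    rw [abs_mul, abs_pow, abs_neg, abs_one, one_pow, one_mul, abs_of_pos (hpos m)]
  have hKpos : 0 < K := by
    rw [hK]
    exact Finset.sum_pos (fun m _ => hpos m) Finset.nonempty_range_add_one
  have hTsucc : ∀ M, T (M+1) = T M + (-1:ℝ)^(M+1) * V (M+1) := by
    intro M
    rw [hT]
    exact Finset.sum_range_succ _ _
  set R : ℕ → ℝ := fun M => (-1:ℝ)^M * T M with hR
  have hRsucc : ∀ M, R (M+1) = V (M+1) - R M := by
    intro M
    have h1 : ((-1:ℝ))^(M+1) * ((-1:ℝ))^(M+1) = 1 := by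
      rw [← pow_add]
      exact Even.neg_one_pow ⟨M+1, by ring⟩
    show (-1:ℝ)^(M+1) * T (M+1) = V (M+1) - (-1:ℝ)^M * T M
    linear_combination ((-1:ℝ)^(M+1)) * hTsucc M + V (M+1) * h1
  have habsR : ∀ M, |R M| = |T M| := by
    intro M
    rw [hR]
    simp only
    rw [abs_mul, abs_pow, abs_neg, abs_one, one_pow, one_mul]
  have hsandwich : ∀ n : ℕ, -K ≤ R (m₀ + n) ∧ R (m₀ + n) ≤ V (m₀ + n) + K := by
    intro n
    induction n with
    | zero =>
      have h1 : |R m₀| ≤ K := by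
        rw [habsR]
        exact hTm₀
      obtain ⟨hl, hr⟩ := abs_le.mp h1
      refine ⟨by simpa using hl, ?_⟩
      have := (hpos m₀).le
      simp only [Nat.add_zero]
      linarith
    | succ n ih =>
      obtain ⟨hl, hr⟩ := ih
      have hstep : R (m₀ + n + 1) = V (m₀ + n + 1) - R (m₀ + n) := hRsucc (m₀ + n)
      constructor
      · rw [show m₀ + (n+1) = m₀ + n + 1 by ring, hstep]
        have hV : V (m₀ + n) ≤ V (m₀ + n + 1) := hmono _ (Nat.le_add_right _ _)
        linarith
      · rw [show m₀ + (n+1) = m₀ + n + 1 by ring, hstep]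
        linarith
  have hlower : ∀ n : ℕ, (ρ - 1) * ρ^n * V m₀ - K ≤ |T (m₀ + n + 1)| := by
    intro n
    have hstep : R (m₀ + n + 1) = V (m₀ + n + 1) - R (m₀ + n) := hRsucc (m₀ + n)
    have hub := (hsandwich n).2
    have hgap : ρ * V (m₀ + n) ≤ V (m₀ + n + 1) := hratio _ (Nat.le_add_right _ _)
    have hg := hgrow n
    have h1 : (ρ - 1) * ρ^n * V m₀ - K ≤ R (m₀ + n + 1) := by
      rw [hstep]
      have hVpos := hpos (m₀ + n)
      nlinarith
    calc (ρ - 1) * ρ^n * V m₀ - K ≤ R (m₀ + n + 1) := h1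
      _ ≤ |R (m₀ + n + 1)| := le_abs_self _
      _ = |T (m₀ + n + 1)| := habsR _
  have hgeom : Tendsto (fun n : ℕ => (ρ - 1) * ρ^n * V m₀ - K) atTop atTop := by
    have h1 : Tendsto (fun n : ℕ => ρ^n) atTop atTop :=
      tendsto_pow_atTop_atTop_of_one_lt hρ
    have h2 : Tendsto (fun n : ℕ => (ρ - 1) * ρ^n) atTop atTop :=
      h1.const_mul_atTop (by linarith)
    have h3 : Tendsto (fun n : ℕ => (ρ - 1) * ρ^n * V m₀) atTop atTop :=
      h2.atTop_mul_const (hpos m₀)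
    exact tendsto_atTop_add_const_right atTop (-K) h3
  have hcomp : Tendsto (fun M : ℕ => (ρ - 1) * ρ^(M - (m₀+1)) * V m₀ - K) atTop atTop := by
    have hsub : Tendsto (fun M : ℕ => M - (m₀+1)) atTop atTop :=
      tendsto_sub_atTop_nat (m₀+1)
    exact hgeom.comp hsub
  apply tendsto_atTop_mono' atTop ?_ hcomp
  filter_upwards [eventually_ge_atTop (m₀+1)] with M hM
  obtain ⟨n, rfl⟩ : ∃ n, M = m₀ + n + 1 := ⟨M - m₀ - 1, by omega⟩
  rw [show m₀ + n + 1 - (m₀ + 1) = n by omega]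
  exact hlower n

end Diverge

section PartialSums
variable {d : ℕ} {a b : ℝ}

lemma sum_W_eq (ha : 0 < a) (k : ℕ) :
    ∑ j ∈ Finset.range (k+1), Wsum a b d j
      = ∑ m ∈ Finset.range (k/2+1), (-1:ℝ)^m * Vsum a b d m := by
  induction k with
  | zero =>
    rw [Finset.sum_range_one, Finset.sum_range_one]
    have := Wsum_even (d := d) (b := b) ha 0
    simpa using this
  | succ k ih =>
    rw [Finset.sum_range_succ, ih]
    rcases Nat.even_or_odd (k+1) with he | ho
    · obtain ⟨m, hm⟩ := he
      have h1 : k + 1 = 2*m := by omega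
      have h2 : k/2 + 1 = m := by omega
      have h3 : (k+1)/2 = m := by omega
      rw [h1, Wsum_even ha m, h2, show 2*m/2 = m by omega, Finset.sum_range_succ]
    · rw [Wsum_odd ha ho, add_zero, Nat.succ_div_of_not_dvd]
      intro hdvd
      obtain ⟨r, hr⟩ := ho
      omega

end PartialSums


section Bounded
variable {d : ℕ}

lemma heatApprox_abs_bounded (k : ℕ) (t : ℝ) (ht : 0 < t)
    (u₀ : EuclideanSpace ℝ (Fin d) → ℝ) :
    ∃ B : ℝ, ∀ x : EuclideanSpace ℝ (Fin d), |heatApprox d k u₀ x t| ≤ B := by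
  have ha : 0 < 1/(4*t) := by positivity
  choose Bq hBq using fun n => gauss_deriv_bounded ha n
  refine ⟨∑ j ∈ Finset.range (k+1), ∑ α ∈ Finset.Nat.antidiagonalTuple d j,
    |((-1:ℝ)^(∑ i, α i) / ∏ i, ((α i).factorial : ℝ)) *
      (∫ y, (∏ i, y i ^ α i) * u₀ y)| *
        (|(4*π*t) ^ (-(d:ℝ)/2)| * ∏ i, Bq (α i)), ?_⟩
  intro x
  rw [heatApprox]
  refine (Finset.abs_sum_le_sum_abs _ _).trans (Finset.sum_le_sum ?_)
  intro j _
  refine (Finset.abs_sum_le_sum_abs _ _).trans (Finset.sum_le_sum ?_)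
  intro α _
  rw [abs_mul]
  refine mul_le_mul_of_nonneg_left ?_ (abs_nonneg _)
  rw [Dmul_heatKernel t ht α x, abs_mul, Finset.abs_prod]
  refine mul_le_mul_of_nonneg_left ?_ (abs_nonneg _)
  exact Finset.prod_le_prod (fun i _ => abs_nonneg _) (fun i _ => hBq (α i) (x i))

end Bounded

end Stmt14

open Stmt14

/-- Divergence of the approximation: for a Gaussian initial datum and
any fixed `0 < t < t₀`, `sup_x |u_k(x,t)| → ∞` as `k → ∞`. -/
theorem stmt_14 (d : ℕ) (hd : 1 ≤ d) (C t₀ : ℝ) (hC : 0 < C) (ht₀ : 0 < t₀)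
    (t : ℝ) (ht : 0 < t) (htt₀ : t < t₀) :
    Tendsto (fun k : ℕ => ⨆ x : EuclideanSpace ℝ (Fin d),
        |heatApprox d k (fun y => C * Real.exp (-‖y‖ ^ 2 / (4 * t₀))) x t|)
      atTop atTop := by
  classical
  set a : ℝ := 1/(4*t) with ha_def
  set b : ℝ := 1/(4*t₀) with hb_def
  have ha : 0 < a := by rw [ha_def]; positivity
  have hb : 0 < b := by rw [hb_def]; positivity
  have hρ : 1 < a/b := by
    rw [ha_def, hb_def, one_lt_div (by positivity)]
    exact one_div_lt_one_div_of_lt (by positivity) (by linarith)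
  set ρ : ℝ := a/b with hρ_def
  set ρ' : ℝ := (1+ρ)/2 with hρ'_def
  have hρ'1 : 1 < ρ' := by rw [hρ'_def]; linarith
  set N : ℕ := Nat.ceil ((ρ-1)⁻¹) with hN_def
  have hN : 1 ≤ (N:ℝ) * (ρ-1) := by
    have h1 : (ρ-1)⁻¹ ≤ (N:ℝ) := Nat.le_ceil _
    have h2 : (0:ℝ) < ρ - 1 := by linarith
    calc (1:ℝ) = (ρ-1)⁻¹ * (ρ-1) := (inv_mul_cancel₀ (ne_of_gt h2)).symm
      _ ≤ (N:ℝ) * (ρ-1) := mul_le_mul_of_nonneg_right h1 h2.le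
  have hratio : ∀ m, d*N ≤ m → ρ' * Vsum a b d m ≤ Vsum a b d (m+1) := by
    intro m hm
    refine le_trans ?_ (Vsum_ratio ha hb hd N m hm)
    apply mul_le_mul_of_nonneg_right ?_ (Vsum_pos ha hb hd m).le
    have h2N : (0:ℝ) < 2*(N:ℝ)+2 := by positivity
    rw [hρ'_def, ← hρ_def, mul_div_assoc', div_le_div_iff₀ (by norm_num) h2N]
    nlinarith [hN, hρ]
  have hdiv := alt_sum_diverges (Vsum a b d) ρ' hρ'1 (d*N)
    (fun m => Vsum_pos ha hb hd m) hratio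
  have hπt : (0:ℝ) < (4*π*t) ^ (-(d:ℝ)/2) := Real.rpow_pos_of_pos (by positivity) _
  have hK : 0 < (4*π*t) ^ (-(d:ℝ)/2) * C := mul_pos hπt hC
  have hval : ∀ k : ℕ, |heatApprox d k (fun y => C * Real.exp (-‖y‖ ^ 2 / (4 * t₀))) 0 t|
      = ((4*π*t) ^ (-(d:ℝ)/2) * C) *
        |∑ m ∈ Finset.range (k/2+1), (-1:ℝ)^m * Vsum a b d m| := by
    intro k
    rw [heatApprox_zero k C t₀ t ht ht₀]
    have hsum : ∑ j ∈ Finset.range (k+1), ∑ α ∈ Finset.Nat.antidiagonalTuple d j,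
        ∏ i, wcoef (1/(4*t)) (1/(4*t₀)) (α i)
        = ∑ m ∈ Finset.range (k/2+1), (-1:ℝ)^m * Vsum a b d m := by
      rw [← ha_def, ← hb_def]
      have h := sum_W_eq (d := d) (a := a) (b := b) ha k
      simp only [Wsum] at h
      exact h
    rw [hsum, abs_mul, abs_of_pos hK]
  have hbdd : ∀ k : ℕ, BddAbove (Set.range fun x : EuclideanSpace ℝ (Fin d) =>
      |heatApprox d k (fun y => C * Real.exp (-‖y‖ ^ 2 / (4 * t₀))) x t|) := by
    intro k
    obtain ⟨B, hB⟩ := heatApprox_abs_bounded k t ht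
      (fun y => C * Real.exp (-‖y‖ ^ 2 / (4 * t₀)))
    refine ⟨B, ?_⟩
    rintro y ⟨x, rfl⟩
    exact hB x
  have hle : ∀ k : ℕ, ((4*π*t) ^ (-(d:ℝ)/2) * C) *
      |∑ m ∈ Finset.range (k/2+1), (-1:ℝ)^m * Vsum a b d m|
      ≤ ⨆ x : EuclideanSpace ℝ (Fin d),
          |heatApprox d k (fun y => C * Real.exp (-‖y‖ ^ 2 / (4 * t₀))) x t| := by
    intro k
    rw [← hval k]
    exact le_ciSup (hbdd k) 0
  have hhalf : Tendsto (fun k : ℕ => k/2) atTop atTop := by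
    apply tendsto_atTop_atTop.mpr
    intro c
    exact ⟨2*c, fun k hk => by omega⟩
  have hcomp : Tendsto (fun k : ℕ => ((4*π*t) ^ (-(d:ℝ)/2) * C) *
      |∑ m ∈ Finset.range (k/2+1), (-1:ℝ)^m * Vsum a b d m|) atTop atTop :=
    (hdiv.comp hhalf).const_mul_atTop hK
  exact tendsto_atTop_mono hle hcomp


end
end
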